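/- (Pairing of products, orthogonality case) Let S_1,...,S_m be primitive series and P_1,...,P_n proper polynomials (no constant term) in K⟨Y⟩. If n > m, then ⟨P_1 ⧢_φ ⋯ ⧢_φ P_n, S_1 S_2 ⋯ S_m⟩ = 0. -/

import Mathlib

noncomputable section

open Finsupp

variable {K : Type*} [CommRing K] [Algebra ℚ K]
variable {Y : Type*} [DecidableEq Y]

/-- The word `w ∈ Y*` viewed as a basis element of `K⟨Y⟩`. -/
def word (w : List Y) : List Y →₀ K := Finsupp.single w 1

/-- Left concatenation by a letter, as a linear endomorphism of `K⟨Y⟩`. -/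
def consL (a : Y) : (List Y →₀ K) →ₗ[K] (List Y →₀ K) :=
  Finsupp.lmapDomain K K (List.cons a)

/-- `m` is the `φ`-deformed shuffle product: it satisfies the initialization
`1 ⧢ w = w ⧢ 1 = w` and the recursion
`(au) ⧢ (bv) = a (u ⧢ bv) + b (au ⧢ v) + φ(a,b)(u ⧢ v)`. -/
def IsPhiShuffle (φ : Y → Y → (Y →₀ K))
    (m : (List Y →₀ K) →ₗ[K] (List Y →₀ K) →ₗ[K] (List Y →₀ K)) : Prop :=
  (∀ w : List Y, m (word []) (word w) = word w) ∧
  (∀ w : List Y, m (word w) (word []) = word w) ∧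
  ∀ (a b : Y) (u v : List Y),
    m (word (a :: u)) (word (b :: v)) =
      consL a (m (word u) (word (b :: v))) + consL b (m (word (a :: u)) (word v)) +
      (φ a b).sum fun c k => k • consL c (m (word u) (word v))

/-- Bilinear extension of `φ` to `KY`. -/
def phiExt (φ : Y → Y → (Y →₀ K)) (p q : Y →₀ K) : Y →₀ K :=
  p.sum fun a ka => q.sum fun b kb => (ka * kb) • φ a b

/-- The extension of `φ` to `KY ⊗ KY → KY` is associative. -/
def PhiAssoc (φ : Y → Y → (Y →₀ K)) : Prop :=
  ∀ a b c : Y, phiExt φ (φ a b) (Finsupp.single c 1) = phiExt φ (Finsupp.single a 1) (φ b c)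

/-- The extension of `φ` is commutative. -/
def PhiComm (φ : Y → Y → (Y →₀ K)) : Prop := ∀ a b : Y, φ a b = φ b a

/-- `φ` is dualizable: for every letter `z` only finitely many pairs of letters
have `z` in the support of their `φ`-product. -/
def PhiDualizable (φ : Y → Y → (Y →₀ K)) : Prop :=
  ∀ z : Y, {p : Y × Y | φ p.1 p.2 z ≠ 0}.Finite

/-- Extension of an associative `φ` to nonempty words: `φ(xw) = φ(x, φ(w))`. -/
def phiWord (φ : Y → Y → (Y →₀ K)) : List Y → (Y →₀ K)
  | [] => 0
  | [x] => Finsupp.single x 1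
  | x :: y :: w => (phiWord φ (y :: w)).sum fun b k => k • φ x b

/-- `φ` is moderate: for every letter `y`, only finitely many nonempty words `w`
satisfy `⟨y, φ(w)⟩ ≠ 0`. -/
def PhiModerate (φ : Y → Y → (Y →₀ K)) : Prop :=
  ∀ y : Y, {w : List Y | w ≠ [] ∧ phiWord φ w y ≠ 0}.Finite

/-- Pairing of two polynomials (the words form an orthonormal basis). -/
def pairPP (p q : List Y →₀ K) : K := p.sum fun w a => a * q w

/-- Pairing `⟨S, p⟩` of a series with a polynomial. -/
def pairPS (S : List Y → K) (p : List Y →₀ K) : K := p.sum fun w a => a * S w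

/-- Concatenation product on `K⟨Y⟩`. -/
def concP (p q : List Y →₀ K) : List Y →₀ K :=
  p.sum fun u a => q.sum fun v b => Finsupp.single (u ++ v) (a * b)

/-- Concatenation powers. -/
def concPow (p : List Y →₀ K) : ℕ → (List Y →₀ K)
  | 0 => word []
  | n + 1 => concP p (concPow p n)

/-- Powers with respect to a bilinear product `m`. -/
def mpow (m : (List Y →₀ K) →ₗ[K] (List Y →₀ K) →ₗ[K] (List Y →₀ K))
    (p : List Y →₀ K) : ℕ → (List Y →₀ K)
  | 0 => word []
  | n + 1 => m p (mpow m p n)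

/-- `m`-product of a list of polynomials. -/
def prodM (m : (List Y →₀ K) →ₗ[K] (List Y →₀ K) →ₗ[K] (List Y →₀ K))
    (L : List (List Y →₀ K)) : List Y →₀ K :=
  L.foldr (fun p acc => m p acc) (word [])

/-- The unit series. -/
def oneS : List Y → K := fun w => if w = [] then 1 else 0

/-- Concatenation (Cauchy) product of series. -/
def mulS (S T : List Y → K) : List Y → K := fun w =>
  ∑ i ∈ Finset.range (w.length + 1), S (w.take i) * T (w.drop i)

/-- Concatenation powers of a series. -/
def powS (S : List Y → K) : ℕ → (List Y → K)
  | 0 => oneS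
  | n + 1 => mulS S (powS S n)

/-- Concatenation product of a list of series. -/
def prodS (L : List (List Y → K)) : List Y → K := L.foldr (fun S acc => mulS S acc) oneS

/-- The coproduct `Δ_{⧢_φ}` dual to `m`, on series: `Δ(S)(u,v) = ⟨S, u ⧢_φ v⟩`. -/
def DeltaS (m : (List Y →₀ K) →ₗ[K] (List Y →₀ K) →ₗ[K] (List Y →₀ K))
    (S : List Y → K) : List Y × List Y → K :=
  fun p => pairPS S (m (word p.1) (word p.2))

/-- `S` is primitive: `Δ_{⧢_φ}(S) = S ⊗ 1 + 1 ⊗ S`. -/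
def PrimS (m : (List Y →₀ K) →ₗ[K] (List Y →₀ K) →ₗ[K] (List Y →₀ K))
    (S : List Y → K) : Prop :=
  ∀ u v : List Y, DeltaS m S (u, v) =
    (if v = [] then S u else 0) + (if u = [] then S v else 0)

/-- `S` is group-like: `⟨S,1⟩ = 1` and `Δ_{⧢_φ}(S) = S ⊗ S`. -/
def GroupLikeS (m : (List Y →₀ K) →ₗ[K] (List Y →₀ K) →ₗ[K] (List Y →₀ K))
    (S : List Y → K) : Prop :=
  S [] = 1 ∧ ∀ u v : List Y, DeltaS m S (u, v) = S u * S v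

/-- `Δfn` is the (finitely supported) dual coproduct witnessing dualizability of `m`:
`⟨u ⧢_φ v, w⟩ = ⟨u ⊗ v, Δ(w)⟩`. -/
def IsDualWitness (m : (List Y →₀ K) →ₗ[K] (List Y →₀ K) →ₗ[K] (List Y →₀ K))
    (Δfn : List Y → (List Y × List Y →₀ K)) : Prop :=
  ∀ u v w : List Y, (m (word u) (word v)) w = Δfn w (u, v)

/-- All factorizations of a word into nonempty blocks. -/
def cuts : List Y → List (List (List Y))
  | [] => [[]]
  | a :: w =>
    (cuts w).flatMap fun parts =>
      match parts with
      | [] => [[[a]]]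
      | p :: ps => [[a] :: p :: ps, (a :: p) :: ps]

/-- The extended Eulerian projector `π₁` on series:
`π₁(S) = Σ_{k≥1} ((-1)^{k-1}/k) Σ_{u_1⋯u_k = w, u_i ∈ Y⁺} ⟨S, u_1 ⧢_φ ⋯ ⧢_φ u_k⟩ w`. -/
def piOneS (m : (List Y →₀ K) →ₗ[K] (List Y →₀ K) →ₗ[K] (List Y →₀ K))
    (S : List Y → K) : List Y → K := fun w =>
  ((cuts w).map fun parts =>
    algebraMap ℚ K ((-1) ^ (parts.length - 1) / (parts.length : ℚ)) *
      pairPS S (prodM m (parts.map word))).sum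

/-- Logarithm of a series `S` with `⟨S,1⟩ = 1`. -/
def logS (S : List Y → K) : List Y → K := fun w =>
  ∑ n ∈ Finset.Icc 1 w.length,
    algebraMap ℚ K ((-1) ^ (n - 1) / (n : ℚ)) * powS (fun t => S t - oneS t) n w

/-- Convolution of endomorphisms (valued in series), using a dual coproduct witness. -/
def convT (Δfn : List Y → (List Y × List Y →₀ K))
    (f g : (List Y →₀ K) → (List Y → K)) : (List Y →₀ K) → (List Y → K) :=
  fun P w => P.sum fun t a =>
    a * (Δfn t).sum fun p c => c * mulS (f (word p.1)) (g (word p.2)) w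

/-- The convolution unit `e = 1 ∘ ε`. -/
def eT : (List Y →₀ K) → (List Y → K) := fun P w => if w = [] then P [] else 0

/-- Convolution powers `π₁^{⋆ n}` of the Eulerian projector. -/
def convPowPi (m : (List Y →₀ K) →ₗ[K] (List Y →₀ K) →ₗ[K] (List Y →₀ K))
    (Δfn : List Y → (List Y × List Y →₀ K)) : ℕ → ((List Y →₀ K) → (List Y → K))
  | 0 => eT
  | n + 1 => convT Δfn (fun P => piOneS m fun t => P t) (convPowPi m Δfn n)

/-- Lyndon words: nonempty and lexicographically smaller than each proper suffix. -/
def IsLyndon [LinearOrder Y] (w : List Y) : Prop :=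
  w ≠ [] ∧ ∀ u v : List Y, u ≠ [] → v ≠ [] → w = u ++ v → List.Lex (· < ·) w v

/-- Strictly decreasing lists of Lyndon words with positive exponents,
indexing monomials in Lyndon words. -/
abbrev DecLyn (Y : Type*) [LinearOrder Y] :=
  {s : List (List Y × ℕ) // (∀ p ∈ s, IsLyndon p.1 ∧ 0 < p.2) ∧
    s.Chain' fun a b => List.Lex (· < ·) b.1 a.1}

/-- `⧢_φ`-monomial `l₁^{⧢ i₁} ⧢ ⋯ ⧢ l_k^{⧢ i_k}`. -/
def shMonomial (m : (List Y →₀ K) →ₗ[K] (List Y →₀ K) →ₗ[K] (List Y →₀ K))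
    (s : List (List Y × ℕ)) : List Y →₀ K :=
  s.foldr (fun p acc => m (mpow m (word p.1) p.2) acc) (word [])

/-- Concatenation monomial `Π_{l₁}^{i₁} ⋯ Π_{l_k}^{i_k}` in a family `Pi`. -/
def concMonomial (Pi : List Y → (List Y →₀ K)) (s : List (List Y × ℕ)) : List Y →₀ K :=
  s.foldr (fun p acc => concP (concPow (Pi p.1) p.2) acc) (word [])

/-- The singleton index `l¹ ∈ DecLyn Y` attached to a Lyndon word. -/
def singleIdx [LinearOrder Y] (l : List Y) (hl : IsLyndon l) : DecLyn Y :=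
  ⟨[(l, 1)], ⟨fun p hp => by
      rw [List.mem_singleton] at hp; subst hp; exact ⟨hl, Nat.one_pos⟩,
    List.isChain_singleton _⟩⟩

/-- `(s, r)` is the standard factorization of the Lyndon word `l`:
`l = sr` with `s, r` nonempty and `r` the lexicographically least proper suffix. -/
def StdFact [LinearOrder Y] (l s r : List Y) : Prop :=
  l = s ++ r ∧ s ≠ [] ∧ r ≠ [] ∧
  ∀ s' r' : List Y, l = s' ++ r' → s' ≠ [] → r' ≠ [] → r = r' ∨ List.Lex (· < ·) r r'

/-- `Pi` is the family defined by `Π_y = π₁(y)` on letters and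
`Π_l = [Π_s, Π_r]` for the standard factorization `(s,r)` of a Lyndon word `l`. -/
def IsPiFamily [LinearOrder Y]
    (m : (List Y →₀ K) →ₗ[K] (List Y →₀ K) →ₗ[K] (List Y →₀ K))
    (Pi : List Y → (List Y →₀ K)) : Prop :=
  (∀ y : Y, ∀ w : List Y, Pi [y] w = piOneS m (fun t => (word [y] : List Y →₀ K) t) w) ∧
  ∀ l s r : List Y, IsLyndon l → StdFact l s r →
    Pi l = concP (Pi s) (Pi r) - concP (Pi r) (Pi s)

/-! ### Auxiliary lemmas for Statement 12 -/

set_option linter.unusedSectionVars false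

section Aux12

lemma pairPS_single (S : List Y → K) (w : List Y) (k : K) :
    pairPS S (Finsupp.single w k) = k * S w :=
  Finsupp.sum_single_index (by simp)

lemma pairPS_word (S : List Y → K) (w : List Y) : pairPS S (word w) = S w := by
  simp [word, pairPS_single]

lemma pairPS_zero (S : List Y → K) : pairPS S (0 : List Y →₀ K) = 0 :=
  Finsupp.sum_zero_index

lemma pairPS_add (S : List Y → K) (p q : List Y →₀ K) :
    pairPS S (p + q) = pairPS S p + pairPS S q :=
  Finsupp.sum_add_index' (by simp) (by intros; ring)

lemma pairPS_smul (S : List Y → K) (k : K) (p : List Y →₀ K) :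
    pairPS S (k • p) = k * pairPS S p := by
  unfold pairPS
  rw [Finsupp.sum_smul_index' (by simp)]
  rw [Finsupp.mul_sum]
  apply Finsupp.sum_congr
  intros; simp [smul_eq_mul]; ring

lemma pairPS_finsetSum (S : List Y → K) {ι : Type*} (s : Finset ι)
    (g : ι → (List Y →₀ K)) :
    pairPS S (∑ i ∈ s, g i) = ∑ i ∈ s, pairPS S (g i) := by
  classical
  induction s using Finset.induction_on with
  | empty => simp [pairPS_zero]
  | insert _ _ h ih => rw [Finset.sum_insert h, pairPS_add, ih, Finset.sum_insert h]

lemma pairPS_finsuppSum (S : List Y → K) (F : Y →₀ K)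
    (g : Y → K → (List Y →₀ K)) :
    pairPS S (F.sum g) = F.sum fun c k => pairPS S (g c k) := by
  rw [Finsupp.sum, Finsupp.sum, pairPS_finsetSum]

lemma pairPS_consL (S : List Y → K) (c : Y) (p : List Y →₀ K) :
    pairPS S (consL c p) = pairPS (fun w => S (c :: w)) p := by
  unfold pairPS consL
  rw [Finsupp.lmapDomain_apply, Finsupp.sum_mapDomain_index (by simp) (by intros; ring)]

lemma pairPS_addS (f g : List Y → K) (p : List Y →₀ K) :
    pairPS (fun w => f w + g w) p = pairPS f p + pairPS g p := by
  unfold pairPS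
  rw [← Finsupp.sum_add]
  apply Finsupp.sum_congr
  intros; ring

lemma pairPS_constMulS (k : K) (f : List Y → K) (p : List Y →₀ K) :
    pairPS (fun w => k * f w) p = k * pairPS f p := by
  unfold pairPS
  rw [Finsupp.mul_sum]
  apply Finsupp.sum_congr
  intros; ring

lemma mulS_cons (S T : List Y → K) (c : Y) (w : List Y) :
    mulS S T (c :: w) = S [] * T (c :: w) + mulS (fun t => S (c :: t)) T w := by
  unfold mulS
  rw [show (c :: w).length = w.length + 1 from rfl, Finset.sum_range_succ']
  simp [add_comm]

lemma pairPS_oneS (p : List Y →₀ K) : pairPS oneS p = p [] := by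
  unfold pairPS
  have : (p.sum fun w a => a * oneS w) = p.sum fun w a => (Finsupp.single w a) [] := by
    apply Finsupp.sum_congr
    intro w _
    rw [Finsupp.single_apply, oneS]
    by_cases h : w = [] <;> simp [h]
  rw [this, ← Finsupp.sum_apply, Finsupp.sum_single]

variable (φ : Y → Y → (Y →₀ K))
variable (m : (List Y →₀ K) →ₗ[K] (List Y →₀ K) →ₗ[K] (List Y →₀ K))

lemma pairPS_m_recur (hm : IsPhiShuffle φ m) (S : List Y → K) (a b : Y) (u v : List Y) :
    pairPS S (m (word (a :: u)) (word (b :: v))) =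
      pairPS (fun w => S (a :: w)) (m (word u) (word (b :: v))) +
      pairPS (fun w => S (b :: w)) (m (word (a :: u)) (word v)) +
      (φ a b).sum (fun c k => k * pairPS (fun w => S (c :: w)) (m (word u) (word v))) := by
  rw [hm.2.2, pairPS_add, pairPS_add, pairPS_finsuppSum, pairPS_consL, pairPS_consL]
  congr 1
  apply Finsupp.sum_congr
  intro c _
  rw [pairPS_smul, pairPS_consL]

lemma pairPS_mulS_recur (hm : IsPhiShuffle φ m) (S T : List Y → K) (a b : Y) (u v : List Y) :
    pairPS (mulS S T) (m (word (a :: u)) (word (b :: v))) =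
      S [] * pairPS T (m (word (a :: u)) (word (b :: v))) +
      pairPS (mulS (fun t => S (a :: t)) T) (m (word u) (word (b :: v))) +
      pairPS (mulS (fun t => S (b :: t)) T) (m (word (a :: u)) (word v)) +
      (φ a b).sum (fun c k => k * pairPS (mulS (fun t => S (c :: t)) T) (m (word u) (word v))) := by
  rw [pairPS_m_recur φ m hm (mulS S T), pairPS_m_recur φ m hm T]
  simp only [mulS_cons]
  simp only [pairPS_addS, pairPS_constMulS]
  rw [show ((φ a b).sum fun c k => k * (S [] * pairPS (fun w => T (c :: w)) (m (word u) (word v)) + pairPS (mulS (fun t => S (c :: t)) T) (m (word u) (word v))))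
      = S [] * ((φ a b).sum fun c k => k * pairPS (fun w => T (c :: w)) (m (word u) (word v))) + ((φ a b).sum fun c k => k * pairPS (mulS (fun t => S (c :: t)) T) (m (word u) (word v))) from by
    rw [Finsupp.mul_sum, ← Finsupp.sum_add]; apply Finsupp.sum_congr; intros; ring]
  ring

lemma sum_split (nI nJ : ℕ) (x : ℕ → ℕ → K) :
    (∑ i ∈ Finset.range (nI + 1), ∑ j ∈ Finset.range (nJ + 1), x i j) =
      x 0 0 + (∑ j ∈ Finset.range nJ, x 0 (j + 1)) + (∑ i ∈ Finset.range nI, x (i + 1) 0)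
      + ∑ i ∈ Finset.range nI, ∑ j ∈ Finset.range nJ, x (i + 1) (j + 1) := by
  rw [Finset.sum_range_succ']
  rw [Finset.sum_range_succ' (fun j => x 0 j) nJ]
  rw [show (∑ i ∈ Finset.range nI, ∑ j ∈ Finset.range (nJ + 1), x (i + 1) j)
      = ∑ i ∈ Finset.range nI, ((∑ j ∈ Finset.range nJ, x (i + 1) (j + 1)) + x (i + 1) 0) from
    Finset.sum_congr rfl fun i _ => Finset.sum_range_succ' _ _]
  rw [Finset.sum_add_distrib]
  ring

lemma sum_peel_inner (nI nJ : ℕ) (x : ℕ → ℕ → K) :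
    (∑ i ∈ Finset.range nI, ∑ j ∈ Finset.range (nJ + 1), x i j)
      = (∑ i ∈ Finset.range nI, x i 0)
        + ∑ i ∈ Finset.range nI, ∑ j ∈ Finset.range nJ, x i (j + 1) := by
  rw [show (∑ i ∈ Finset.range nI, ∑ j ∈ Finset.range (nJ + 1), x i j)
      = ∑ i ∈ Finset.range nI, ((∑ j ∈ Finset.range nJ, x i (j + 1)) + x i 0) from
    Finset.sum_congr rfl fun i _ => Finset.sum_range_succ' _ _]
  rw [Finset.sum_add_distrib]
  ring

lemma sum_peel_outer (nI nJ : ℕ) (x : ℕ → ℕ → K) :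
    (∑ i ∈ Finset.range (nI + 1), ∑ j ∈ Finset.range nJ, x i j)
      = (∑ j ∈ Finset.range nJ, x 0 j)
        + ∑ i ∈ Finset.range nI, ∑ j ∈ Finset.range nJ, x (i + 1) j := by
  rw [Finset.sum_range_succ']
  ring

lemma finsupp_sum_swap (F : Y →₀ K) (I J : Finset ℕ) (g : Y → ℕ → ℕ → K) :
    (∑ i ∈ I, ∑ j ∈ J, F.sum fun c k => k * g c i j)
      = F.sum fun c k => k * ∑ i ∈ I, ∑ j ∈ J, g c i j := by
  simp only [Finsupp.sum, Finset.mul_sum]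
  calc (∑ i ∈ I, ∑ j ∈ J, ∑ c ∈ F.support, F c * g c i j)
      = ∑ i ∈ I, ∑ c ∈ F.support, ∑ j ∈ J, F c * g c i j :=
        Finset.sum_congr rfl fun i _ => Finset.sum_comm
    _ = ∑ c ∈ F.support, ∑ i ∈ I, ∑ j ∈ J, F c * g c i j := Finset.sum_comm

/-- The main bilinear duality lemma: pairing a Cauchy product of two series
against a `φ`-shuffle of two words decomposes over deconcatenations. -/
lemma L1 (hm : IsPhiShuffle φ m) (u v : List Y) (S T : List Y → K) :
    pairPS (mulS S T) (m (word u) (word v)) =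
      ∑ i ∈ Finset.range (u.length + 1), ∑ j ∈ Finset.range (v.length + 1),
        pairPS S (m (word (List.take i u)) (word (List.take j v))) *
        pairPS T (m (word (List.drop i u)) (word (List.drop j v))) :=
  match u, v with
  | [], v => by
      rw [hm.1, pairPS_word]
      simp [hm.1, pairPS_word, mulS]
  | a :: u', [] => by
      rw [hm.2.1, pairPS_word]
      simp [hm.2.1, pairPS_word, mulS]
  | a :: u', b :: v' => by
      have IH1 := L1 hm u' (b :: v') (fun t => S (a :: t)) T
      have IH2 := L1 hm (a :: u') v' (fun t => S (b :: t)) T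
      have IH3 : ((φ a b).sum fun c k =>
            k * pairPS (mulS (fun t => S (c :: t)) T) (m (word u') (word v')))
          = (φ a b).sum fun c k => k *
              ∑ i ∈ Finset.range (u'.length + 1), ∑ j ∈ Finset.range (v'.length + 1),
                pairPS (fun t => S (c :: t)) (m (word (List.take i u')) (word (List.take j v'))) *
                pairPS T (m (word (List.drop i u')) (word (List.drop j v'))) :=
        Finsupp.sum_congr fun c _ => by rw [L1 hm u' v' (fun t => S (c :: t)) T]
      rw [pairPS_mulS_recur φ m hm, IH1, IH2, IH3]
      simp only [List.length_cons]
      have hg2 : (∑ i ∈ Finset.range (u'.length + 1), ∑ j ∈ Finset.range (v'.length + 1 + 1),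
            pairPS (fun t => S (a :: t)) (m (word (List.take i u')) (word (List.take j (b :: v')))) *
            pairPS T (m (word (List.drop i u')) (word (List.drop j (b :: v')))))
          = (∑ i ∈ Finset.range (u'.length + 1),
              S (a :: List.take i u') * pairPS T (m (word (List.drop i u')) (word (b :: v'))))
            + ∑ i ∈ Finset.range (u'.length + 1), ∑ j ∈ Finset.range (v'.length + 1),
                pairPS (fun t => S (a :: t)) (m (word (List.take i u')) (word (b :: List.take j v'))) *
                pairPS T (m (word (List.drop i u')) (word (List.drop j v'))) := by
        rw [sum_peel_inner]
        simp [hm.2.1, pairPS_word]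
      have hg3 : (∑ i ∈ Finset.range (u'.length + 1 + 1), ∑ j ∈ Finset.range (v'.length + 1),
            pairPS (fun t => S (b :: t)) (m (word (List.take i (a :: u'))) (word (List.take j v'))) *
            pairPS T (m (word (List.drop i (a :: u'))) (word (List.drop j v'))))
          = (∑ j ∈ Finset.range (v'.length + 1),
              S (b :: List.take j v') * pairPS T (m (word (a :: u')) (word (List.drop j v'))))
            + ∑ i ∈ Finset.range (u'.length + 1), ∑ j ∈ Finset.range (v'.length + 1),
                pairPS (fun t => S (b :: t)) (m (word (a :: List.take i u')) (word (List.take j v'))) *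
                pairPS T (m (word (List.drop i u')) (word (List.drop j v'))) := by
        rw [sum_peel_outer]
        simp [hm.1, pairPS_word]
      have hRHS : (∑ i ∈ Finset.range (u'.length + 1 + 1), ∑ j ∈ Finset.range (v'.length + 1 + 1),
            pairPS S (m (word (List.take i (a :: u'))) (word (List.take j (b :: v')))) *
            pairPS T (m (word (List.drop i (a :: u'))) (word (List.drop j (b :: v')))))
          = S [] * pairPS T (m (word (a :: u')) (word (b :: v')))
            + (∑ j ∈ Finset.range (v'.length + 1),
                S (b :: List.take j v') * pairPS T (m (word (a :: u')) (word (List.drop j v'))))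
            + (∑ i ∈ Finset.range (u'.length + 1),
                S (a :: List.take i u') * pairPS T (m (word (List.drop i u')) (word (b :: v'))))
            + ∑ i ∈ Finset.range (u'.length + 1), ∑ j ∈ Finset.range (v'.length + 1),
                pairPS S (m (word (a :: List.take i u')) (word (b :: List.take j v'))) *
                pairPS T (m (word (List.drop i u')) (word (List.drop j v'))) := by
        rw [sum_split]
        simp [hm.1, hm.2.1, pairPS_word]
      have hcore : (∑ i ∈ Finset.range (u'.length + 1), ∑ j ∈ Finset.range (v'.length + 1),
            pairPS S (m (word (a :: List.take i u')) (word (b :: List.take j v'))) *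
            pairPS T (m (word (List.drop i u')) (word (List.drop j v'))))
          = (∑ i ∈ Finset.range (u'.length + 1), ∑ j ∈ Finset.range (v'.length + 1),
                pairPS (fun t => S (a :: t)) (m (word (List.take i u')) (word (b :: List.take j v'))) *
                pairPS T (m (word (List.drop i u')) (word (List.drop j v'))))
            + (∑ i ∈ Finset.range (u'.length + 1), ∑ j ∈ Finset.range (v'.length + 1),
                pairPS (fun t => S (b :: t)) (m (word (a :: List.take i u')) (word (List.take j v'))) *
                pairPS T (m (word (List.drop i u')) (word (List.drop j v'))))
            + (φ a b).sum fun c k => k *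
                ∑ i ∈ Finset.range (u'.length + 1), ∑ j ∈ Finset.range (v'.length + 1),
                  pairPS (fun t => S (c :: t)) (m (word (List.take i u')) (word (List.take j v'))) *
                  pairPS T (m (word (List.drop i u')) (word (List.drop j v'))) := by
        rw [show (∑ i ∈ Finset.range (u'.length + 1), ∑ j ∈ Finset.range (v'.length + 1),
              pairPS S (m (word (a :: List.take i u')) (word (b :: List.take j v'))) *
              pairPS T (m (word (List.drop i u')) (word (List.drop j v'))))
            = ∑ i ∈ Finset.range (u'.length + 1), ∑ j ∈ Finset.range (v'.length + 1),
                (pairPS (fun t => S (a :: t)) (m (word (List.take i u')) (word (b :: List.take j v'))) *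
                  pairPS T (m (word (List.drop i u')) (word (List.drop j v')))
                + pairPS (fun t => S (b :: t)) (m (word (a :: List.take i u')) (word (List.take j v'))) *
                  pairPS T (m (word (List.drop i u')) (word (List.drop j v')))
                + (φ a b).sum fun c k => k *
                    (pairPS (fun t => S (c :: t)) (m (word (List.take i u')) (word (List.take j v'))) *
                     pairPS T (m (word (List.drop i u')) (word (List.drop j v'))))) from
          Finset.sum_congr rfl fun i _ => Finset.sum_congr rfl fun j _ => by
            rw [pairPS_m_recur φ m hm, add_mul, add_mul, Finsupp.sum_mul]
            congr 1
            apply Finsupp.sum_congr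
            intros; ring]
        simp only [Finset.sum_add_distrib]
        rw [finsupp_sum_swap]
      rw [hRHS, hcore, hg2, hg3]
      ring
termination_by u.length + v.length
decreasing_by all_goals (simp; try omega)

lemma consL_apply_nil (c : Y) (p : List Y →₀ K) : consL c p ([] : List Y) = 0 := by
  rw [consL, Finsupp.lmapDomain_apply]
  exact Finsupp.mapDomain_notin_range _ _ (by simp)

lemma m_word_apply_nil (hm : IsPhiShuffle φ m) (u v : List Y) :
    (m (word u) (word v)) ([] : List Y) = oneS u * oneS v := by
  match u, v with
  | [], v =>
      rw [hm.1, word, Finsupp.single_apply]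
      simp only [oneS]
      by_cases h : v = [] <;> simp [h]
  | a :: u', [] =>
      rw [hm.2.1, word, Finsupp.single_apply]
      simp [oneS]
  | a :: u', b :: v' =>
      rw [hm.2.2]
      simp only [Finsupp.add_apply, consL_apply_nil, Finsupp.sum_apply, Finsupp.smul_apply,
        smul_eq_mul, mul_zero, Finsupp.sum, Finset.sum_const_zero, add_zero, oneS]
      simp [consL_apply_nil]

/-- All order-preserving splittings of a list into two complementary sublists. -/
def splits {α : Type*} : List α → List (List α × List α)
  | [] => [([], [])]
  | a :: l => (splits l).flatMap fun p => [(a :: p.1, p.2), (p.1, a :: p.2)]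

lemma splits_length {α : Type*} :
    ∀ {l : List α} {p : List α × List α}, p ∈ splits l →
      p.1.length + p.2.length = l.length := by
  intro l
  induction l with
  | nil => intro p hp; simp only [splits, List.mem_singleton] at hp; simp [hp]
  | cons a l ih =>
      intro p hp
      simp only [splits, List.mem_flatMap, List.mem_cons, List.mem_singleton,
        List.not_mem_nil, or_false] at hp
      obtain ⟨q, hq, rfl | rfl⟩ := hp
      · have := ih hq; simp; omega
      · have := ih hq; simp; omega

lemma splits_subset {α : Type*} :
    ∀ {l : List α} {p : List α × List α}, p ∈ splits l →
      (∀ x ∈ p.1, x ∈ l) ∧ (∀ x ∈ p.2, x ∈ l) := by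
  intro l
  induction l with
  | nil => intro p hp; simp only [splits, List.mem_singleton] at hp; simp [hp]
  | cons a l ih =>
      intro p hp
      simp only [splits, List.mem_flatMap, List.mem_cons, List.mem_singleton,
        List.not_mem_nil, or_false] at hp
      obtain ⟨q, hq, rfl | rfl⟩ := hp
      · have := ih hq
        refine ⟨fun x hx => ?_, fun x hx => List.mem_cons_of_mem _ (this.2 x hx)⟩
        rcases List.mem_cons.1 hx with h | h
        · exact h ▸ List.mem_cons_self
        · exact List.mem_cons_of_mem _ (this.1 x h)
      · have := ih hq
        refine ⟨fun x hx => List.mem_cons_of_mem _ (this.1 x hx), fun x hx => ?_⟩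
        rcases List.mem_cons.1 hx with h | h
        · exact h ▸ List.mem_cons_self
        · exact List.mem_cons_of_mem _ (this.2 x h)

lemma list_sum_finset_sum {α : Type*} (l : List α) {ι : Type*} (s : Finset ι)
    (f : ι → α → K) :
    (∑ i ∈ s, (l.map (f i)).sum) = (l.map fun p => ∑ i ∈ s, f i p).sum := by
  induction l with
  | nil => simp
  | cons a l ih => simp [Finset.sum_add_distrib, ih]

lemma list_map_sum_add {α : Type*} (l : List α) (f g : α → K) :
    (l.map fun p => f p + g p).sum = (l.map f).sum + (l.map g).sum := by
  induction l with
  | nil => simp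
  | cons a l ih => simp [ih]; ring

lemma sum_ite_zero_first (n : ℕ) (g : ℕ → K) :
    (∑ i ∈ Finset.range (n + 1), if i = 0 then g i else 0) = g 0 := by
  rw [Finset.sum_ite_eq' (Finset.range (n + 1)) 0 g]
  simp

/-- The split lemma: pairing a product of primitive series against a
`φ`-shuffle of two words decomposes over complementary sublists. -/
lemma split_lemma (hm : IsPhiShuffle φ m) :
    ∀ (Ss : List (List Y → K)), (∀ S ∈ Ss, PrimS m S) → ∀ u v : List Y,
      pairPS (prodS Ss) (m (word u) (word v))
        = ((splits Ss).map fun p => prodS p.1 u * prodS p.2 v).sum := by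
  intro Ss
  induction Ss with
  | nil =>
      intro _ u v
      have h0 : pairPS (prodS ([] : List (List Y → K))) (m (word u) (word v))
          = (m (word u) (word v)) ([] : List Y) := pairPS_oneS _
      rw [h0, m_word_apply_nil φ m hm]
      simp [splits, prodS]
  | cons S L ih =>
      intro hprim u v
      have hSprim : PrimS m S := hprim S (List.mem_cons_self)
      have hLprim : ∀ S' ∈ L, PrimS m S' := fun S' h => hprim S' (List.mem_cons_of_mem _ h)
      have hmain : pairPS (prodS (S :: L)) (m (word u) (word v))
          = (∑ i ∈ Finset.range (u.length + 1),
              S (List.take i u) * pairPS (prodS L) (m (word (List.drop i u)) (word v)))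
            + ∑ j ∈ Finset.range (v.length + 1),
              S (List.take j v) * pairPS (prodS L) (m (word u) (word (List.drop j v))) := by
        rw [show prodS (S :: L) = mulS S (prodS L) from rfl]
        rw [L1 φ m hm]
        have h1 : ∀ i ∈ Finset.range (u.length + 1), ∀ j ∈ Finset.range (v.length + 1),
            pairPS S (m (word (List.take i u)) (word (List.take j v))) *
              pairPS (prodS L) (m (word (List.drop i u)) (word (List.drop j v)))
            = (if j = 0 then S (List.take i u) *
                pairPS (prodS L) (m (word (List.drop i u)) (word (List.drop j v))) else 0)
              + (if i = 0 then S (List.take j v) *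
                pairPS (prodS L) (m (word (List.drop i u)) (word (List.drop j v))) else 0) := by
          intro i hi j hj
          have hp := hSprim (List.take i u) (List.take j v)
          rw [DeltaS] at hp
          rw [hp, add_mul, ite_mul, ite_mul]
          simp only [zero_mul]
          rw [Finset.mem_range] at hi hj
          congr 1
          · congr 1
            rw [eq_iff_iff, List.take_eq_nil_iff]
            constructor
            · rintro (rfl | rfl)
              · rfl
              · simp only [List.length_nil] at hj; omega
            · rintro rfl; left; rfl
          · congr 1
            rw [eq_iff_iff, List.take_eq_nil_iff]
            constructor
            · rintro (rfl | rfl)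
              · rfl
              · simp only [List.length_nil] at hi; omega
            · rintro rfl; left; rfl
        rw [Finset.sum_congr rfl fun i hi => Finset.sum_congr rfl fun j hj => h1 i hi j hj]
        simp only [Finset.sum_add_distrib]
        congr 1
        · apply Finset.sum_congr rfl
          intro i _
          rw [sum_ite_zero_first]
          simp
        · rw [Finset.sum_comm]
          apply Finset.sum_congr rfl
          intro j _
          rw [sum_ite_zero_first]
          simp
      rw [hmain]
      have hR : ((splits (S :: L)).map fun p => prodS p.1 u * prodS p.2 v).sum
          = ((splits L).map fun p =>
              prodS (S :: p.1) u * prodS p.2 v + prodS p.1 u * prodS (S :: p.2) v).sum := by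
        rw [show splits (S :: L) = (splits L).flatMap
            fun p => [(S :: p.1, p.2), (p.1, S :: p.2)] from rfl]
        induction (splits L) with
        | nil => simp
        | cons q t iht => simp [iht]; ring
      rw [hR, list_map_sum_add]
      congr 1
      · rw [show (∑ i ∈ Finset.range (u.length + 1),
            S (List.take i u) * pairPS (prodS L) (m (word (List.drop i u)) (word v)))
            = ∑ i ∈ Finset.range (u.length + 1),
                ((splits L).map fun p =>
                  S (List.take i u) * (prodS p.1 (List.drop i u) * prodS p.2 v)).sum from
          Finset.sum_congr rfl fun i _ => by
            rw [ih hLprim (List.drop i u) v, ← List.sum_map_mul_left]]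
        rw [list_sum_finset_sum]
        apply congrArg List.sum
        apply List.map_congr_left
        intro p _
        rw [show prodS (S :: p.1) = mulS S (prodS p.1) from rfl]
        rw [show (mulS S (prodS p.1) u * prodS p.2 v)
            = (∑ i ∈ Finset.range (u.length + 1),
                S (List.take i u) * prodS p.1 (List.drop i u)) * prodS p.2 v from rfl]
        rw [Finset.sum_mul]
        apply Finset.sum_congr rfl
        intros; ring
      · rw [show (∑ j ∈ Finset.range (v.length + 1),
            S (List.take j v) * pairPS (prodS L) (m (word u) (word (List.drop j v))))
            = ∑ j ∈ Finset.range (v.length + 1),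
                ((splits L).map fun p =>
                  S (List.take j v) * (prodS p.1 u * prodS p.2 (List.drop j v))).sum from
          Finset.sum_congr rfl fun j _ => by
            rw [ih hLprim u (List.drop j v), ← List.sum_map_mul_left]]
        rw [list_sum_finset_sum]
        apply congrArg List.sum
        apply List.map_congr_left
        intro p _
        rw [show prodS (S :: p.2) = mulS S (prodS p.2) from rfl]
        rw [show (prodS p.1 u * mulS S (prodS p.2) v)
            = prodS p.1 u * ∑ j ∈ Finset.range (v.length + 1),
                S (List.take j v) * prodS p.2 (List.drop j v) from rfl]
        rw [Finset.mul_sum]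
        apply Finset.sum_congr rfl
        intros; ring

lemma pairPS_m_right (R : List Y → K) (w : List Y) (q : List Y →₀ K) :
    pairPS R (m (word w) q) = q.sum fun w₂ b => b * pairPS R (m (word w) (word w₂)) := by
  induction q using Finsupp.induction_linear with
  | zero => simp [pairPS_zero]
  | add p q ihp ihq =>
      rw [map_add, pairPS_add, ihp, ihq, Finsupp.sum_add_index' (by simp) (by intros; ring)]
  | single t k =>
      rw [Finsupp.sum_single_index (by simp)]
      rw [show (Finsupp.single t k : List Y →₀ K) = k • word t from by
          rw [word, Finsupp.smul_single, smul_eq_mul, mul_one]]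
      rw [map_smul, pairPS_smul]

lemma pairPS_m_expand (R : List Y → K) (p q : List Y →₀ K) :
    pairPS R (m p q)
      = p.sum fun w₁ a => a * (q.sum fun w₂ b => b * pairPS R (m (word w₁) (word w₂))) := by
  induction p using Finsupp.induction_linear with
  | zero => simp [pairPS_zero]
  | add p1 p2 ih1 ih2 =>
      rw [map_add, LinearMap.add_apply, pairPS_add, ih1, ih2,
        Finsupp.sum_add_index' (by simp) (by intros; ring)]
  | single t k =>
      rw [Finsupp.sum_single_index (by simp)]
      rw [show (Finsupp.single t k : List Y →₀ K) = k • word t from by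
          rw [word, Finsupp.smul_single, smul_eq_mul, mul_one]]
      rw [map_smul, LinearMap.smul_apply, pairPS_smul, pairPS_m_right]

lemma finsupp_sum_list_sum {γ : Type*} (q : List Y →₀ K) (l : List γ)
    (g : γ → List Y → K → K) :
    (q.sum fun w b => (l.map fun r => g r w b).sum)
      = (l.map fun r => q.sum fun w b => g r w b).sum := by
  induction l with
  | nil => simp
  | cons r l ihl =>
      simp only [List.map_cons, List.sum_cons]
      rw [Finsupp.sum_add, ihl]

lemma pairPS_prodS_m (hm : IsPhiShuffle φ m) (Ss : List (List Y → K))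
    (hS : ∀ S ∈ Ss, PrimS m S) (p q : List Y →₀ K) :
    pairPS (prodS Ss) (m p q)
      = ((splits Ss).map fun r => pairPS (prodS r.1) p * pairPS (prodS r.2) q).sum := by
  calc pairPS (prodS Ss) (m p q)
      = p.sum fun w₁ a => a * (q.sum fun w₂ b => b * pairPS (prodS Ss) (m (word w₁) (word w₂))) :=
        pairPS_m_expand m _ p q
    _ = p.sum fun w₁ a =>
          ((splits Ss).map fun r =>
            a * (q.sum fun w₂ b => b * (prodS r.1 w₁ * prodS r.2 w₂))).sum := by
        apply Finsupp.sum_congr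
        intro w₁ _
        rw [show (q.sum fun w₂ b => b * pairPS (prodS Ss) (m (word w₁) (word w₂)))
            = q.sum fun w₂ b => ((splits Ss).map fun r => b * (prodS r.1 w₁ * prodS r.2 w₂)).sum from
          Finsupp.sum_congr fun w₂ _ => by
            rw [split_lemma φ m hm Ss hS w₁ w₂, List.sum_map_mul_left]]
        rw [finsupp_sum_list_sum, ← List.sum_map_mul_left]
    _ = ((splits Ss).map fun r =>
          p.sum fun w₁ a => a * (q.sum fun w₂ b => b * (prodS r.1 w₁ * prodS r.2 w₂))).sum :=
        finsupp_sum_list_sum p _ _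
    _ = ((splits Ss).map fun r => pairPS (prodS r.1) p * pairPS (prodS r.2) q).sum := by
        apply congrArg List.sum
        apply List.map_congr_left
        intro r _
        rw [show pairPS (prodS r.1) p * pairPS (prodS r.2) q
            = p.sum fun w₁ a => (a * prodS r.1 w₁) * pairPS (prodS r.2) q from by
          show (p.sum fun w₁ a => a * prodS r.1 w₁) * pairPS (prodS r.2) q
              = p.sum fun w₁ a => (a * prodS r.1 w₁) * pairPS (prodS r.2) q
          exact Finsupp.sum_mul _ _]
        apply Finsupp.sum_congr
        intro w₁ _
        rw [show (q.sum fun w₂ b => b * (prodS r.1 w₁ * prodS r.2 w₂))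
            = prodS r.1 w₁ * q.sum fun w₂ b => b * prodS r.2 w₂ from by
          rw [Finsupp.mul_sum]; exact Finsupp.sum_congr fun w₂ _ => by ring]
        rw [show (q.sum fun w₂ b => b * prodS r.2 w₂) = pairPS (prodS r.2) q from rfl]
        ring

end Aux12

/-- pairing of products, orthogonality: if `S_1,…,S_m` are
primitive series, `P_1,…,P_n` proper polynomials and `n > m`, then
`⟨P_1 ⧢_φ ⋯ ⧢_φ P_n, S_1 ⋯ S_m⟩ = 0`. -/
theorem pairing_products_orthogonal (φ : Y → Y → (Y →₀ K))
    (m : (List Y →₀ K) →ₗ[K] (List Y →₀ K) →ₗ[K] (List Y →₀ K))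
    (hm : IsPhiShuffle φ m) (hassoc : PhiAssoc φ) (hcomm : PhiComm φ)
    (hdual : PhiDualizable φ)
    (Ps : List (List Y →₀ K)) (Ss : List (List Y → K))
    (hP : ∀ P ∈ Ps, P ([] : List Y) = 0) (hS : ∀ S ∈ Ss, PrimS m S)
    (hlen : Ss.length < Ps.length) :
    pairPS (prodS Ss) (prodM m Ps) = 0 := by
  clear hassoc hcomm hdual
  induction Ps generalizing Ss with
  | nil => exact absurd hlen (Nat.not_lt_zero _)
  | cons P Ps' ih =>
      rw [show prodM m (P :: Ps') = m P (prodM m Ps') from rfl]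
      rw [pairPS_prodS_m φ m hm Ss hS P (prodM m Ps')]
      apply List.sum_eq_zero
      intro x hx
      rw [List.mem_map] at hx
      obtain ⟨r, hr, rfl⟩ := hx
      by_cases hA : r.1 = []
      · rw [hA, show prodS ([] : List (List Y → K)) = oneS from rfl, pairPS_oneS,
          hP P (List.mem_cons_self), zero_mul]
      · have h1 := splits_length hr
        have h2 : 0 < r.1.length := List.length_pos_iff.2 hA
        have hlen2 : r.2.length < Ps'.length := by
          simp only [List.length_cons] at hlen
          omega
        have hprim2 : ∀ S ∈ r.2, PrimS m S := fun S h => hS S ((splits_subset hr).2 S h)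
        rw [ih r.2 (fun P hp => hP P (List.mem_cons_of_mem _ hp)) hprim2 hlen2, mul_zero]

end
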